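/- Let 𝔄 be a 2p×2p complex matrix with p×p blocks 𝔄_{ij} (i,j ∈ {1,2}) such that 𝔄*J𝔄 − J is positive semidefinite. Let R, Q be p×p complex matrices with R*Q + Q*R positive semidefinite, and suppose F := 𝔄_{21}R + 𝔄_{22}Q is invertible. Then the matrix φ := i(𝔄_{11}R + 𝔄_{12}Q)F^{−1} satisfies Im φ ≥ 0, i.e. (φ − φ*)/(2i) is positive semidefinite. -/

import Mathlib

open Matrix
open scoped ComplexOrder

lemma psd_smul_half {n : Type*} [Fintype n] {A : Matrix n n ℂ} (hA : A.PosSemidef) :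
    (((2:ℂ))⁻¹ • A).PosSemidef := by
  constructor
  · have h := hA.isHermitian
    unfold Matrix.IsHermitian at *
    rw [conjTranspose_smul, h]
    congr 1
    simp [starRingEnd_apply]
  · intro x
    have h := hA.2 x
    have : (0:ℂ) ≤ (2:ℂ)⁻¹ := by
      rw [Complex.le_def]; norm_num
    exact (hA.smul this).2 x

/-- if `𝔄* J 𝔄 - J ≥ 0` and `(R, Q)` satisfies `R*Q + Q*R ≥ 0` with
`F = 𝔄₂₁ R + 𝔄₂₂ Q` invertible, then `φ = i (𝔄₁₁ R + 𝔄₁₂ Q) F⁻¹` has `Im φ ≥ 0`. -/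
theorem lft_of_expansive_frame_is_herglotz
    {p : ℕ} (hp : 1 ≤ p)
    (𝔄 : Matrix (Fin p ⊕ Fin p) (Fin p ⊕ Fin p) ℂ)
    (h𝔄 : (𝔄ᴴ * Matrix.fromBlocks 0 1 1 0 * 𝔄 - Matrix.fromBlocks 0 1 1 0).PosSemidef)
    (R Q : Matrix (Fin p) (Fin p) ℂ)
    (hRQ : (Rᴴ * Q + Qᴴ * R).PosSemidef)
    (hF : IsUnit (𝔄.toBlocks₂₁ * R + 𝔄.toBlocks₂₂ * Q)) :
    ((2 * Complex.I)⁻¹ •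
      (Complex.I • ((𝔄.toBlocks₁₁ * R + 𝔄.toBlocks₁₂ * Q) *
          (𝔄.toBlocks₂₁ * R + 𝔄.toBlocks₂₂ * Q)⁻¹) -
        (Complex.I • ((𝔄.toBlocks₁₁ * R + 𝔄.toBlocks₁₂ * Q) *
          (𝔄.toBlocks₂₁ * R + 𝔄.toBlocks₂₂ * Q)⁻¹))ᴴ)).PosSemidef := by
  set E := 𝔄.toBlocks₁₁ * R + 𝔄.toBlocks₁₂ * Q with hE
  set F := 𝔄.toBlocks₂₁ * R + 𝔄.toBlocks₂₂ * Q with hFdef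
  set J : Matrix (Fin p ⊕ Fin p) (Fin p ⊕ Fin p) ℂ := Matrix.fromBlocks 0 1 1 0 with hJ
  set v : Matrix (Fin p ⊕ Fin p) (Fin p) ℂ := Matrix.fromRows R Q with hv
  -- 𝔄 * v = fromRows E F
  have h𝔄v : 𝔄 * v = Matrix.fromRows E F := by
    conv_lhs => rw [← Matrix.fromBlocks_toBlocks 𝔄]
    rw [hv, Matrix.fromBlocks_mul_fromRows]
  -- key: Fᴴ E + Eᴴ F is PosSemidef
  have hS : (Fᴴ * E + Eᴴ * F).PosSemidef := by
    have h1 : (vᴴ * (𝔄ᴴ * J * 𝔄 - J) * v).PosSemidef :=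
      h𝔄.conjTranspose_mul_mul_same v
    have h2 : vᴴ * (𝔄ᴴ * J * 𝔄 - J) * v
        = (Fᴴ * E + Eᴴ * F) - (Rᴴ * Q + Qᴴ * R) := by
      have hvJv : vᴴ * J * v = Qᴴ * R + Rᴴ * Q := by
        rw [hv, hJ, Matrix.conjTranspose_fromRows_eq_fromCols_conjTranspose,
          Matrix.fromCols_mul_fromBlocks, Matrix.fromCols_mul_fromRows]
        simp
      have hAvJAv : vᴴ * (𝔄ᴴ * J * 𝔄) * v = Fᴴ * E + Eᴴ * F := by
        have : vᴴ * (𝔄ᴴ * J * 𝔄) * v = (𝔄 * v)ᴴ * J * (𝔄 * v) := by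
          rw [Matrix.conjTranspose_mul]
          simp only [Matrix.mul_assoc]
        rw [this, h𝔄v, hJ, Matrix.conjTranspose_fromRows_eq_fromCols_conjTranspose,
          Matrix.fromCols_mul_fromBlocks, Matrix.fromCols_mul_fromRows]
        simp
      rw [Matrix.mul_sub, Matrix.sub_mul, hAvJAv, hvJv]
      abel
    have := h1.add hRQ
    rw [h2] at this
    convert this using 1
    abel
  -- F is invertible
  have hFdet : IsUnit F.det := (Matrix.isUnit_iff_isUnit_det F).mp hF
  have hFinv : F * F⁻¹ = 1 := Matrix.mul_nonsing_inv F hFdet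
  -- the conjugated matrix
  have hconj : ((F⁻¹)ᴴ * (Fᴴ * E + Eᴴ * F) * F⁻¹).PosSemidef :=
    hS.conjTranspose_mul_mul_same F⁻¹
  have hpsd := psd_smul_half hconj
  convert hpsd using 1
  have h1 : (F⁻¹)ᴴ * (Fᴴ * E + Eᴴ * F) * F⁻¹
      = E * F⁻¹ + (F⁻¹)ᴴ * Eᴴ := by
    have hFF : (F⁻¹)ᴴ * Fᴴ = 1 := by
      rw [← Matrix.conjTranspose_mul, hFinv, Matrix.conjTranspose_one]
    calc (F⁻¹)ᴴ * (Fᴴ * E + Eᴴ * F) * F⁻¹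
        = ((F⁻¹)ᴴ * Fᴴ) * E * F⁻¹ + (F⁻¹)ᴴ * Eᴴ * (F * F⁻¹) := by noncomm_ring
      _ = E * F⁻¹ + (F⁻¹)ᴴ * Eᴴ := by rw [hFF, hFinv, Matrix.one_mul, Matrix.mul_one]
  rw [h1, Matrix.conjTranspose_smul, Complex.star_def, Complex.conj_I,
    Matrix.conjTranspose_mul, neg_smul, sub_neg_eq_add, ← smul_add, smul_smul,
    show (2 * Complex.I)⁻¹ * Complex.I = (2:ℂ)⁻¹ by field_simp]
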